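/- Penalty bound: if w^ε is a classical solution of w_t - w_{xx} = -β(ε^{-1}(w - p)) on ℝ×(0,T] with β(z) = m(max{0,z})³, w^ε(·,0) ≤ p(0), and p ∈ C¹ with ‖ṗ‖_∞ ≤ m, then w^ε ≤ p + ε on ℝ×(0,T], and consequently 0 ≤ β(ε^{-1}(w^ε - p)) ≤ m everywhere. -/

import Mathlib

open Set Filter Topology

lemma deriv_nonneg_of_max_left (f : ℝ → ℝ) (a d : ℝ) (ha : 0 < a)
    (hf : HasDerivAt f d a) (hmax : ∀ t ∈ Set.Ioo (0:ℝ) a, f t ≤ f a) : 0 ≤ d := by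
  have h1 : Tendsto (slope f a) (𝓝[<] a) (𝓝 d) :=
    (hasDerivAt_iff_tendsto_slope.mp hf).mono_left
      (nhdsWithin_mono a (fun x hx => ne_of_lt hx))
  have h2 : Tendsto (slope f a) (𝓝[Set.Ioo 0 a] a) (𝓝 d) :=
    h1.mono_left (nhdsWithin_mono a (fun x hx => hx.2))
  have hne : (𝓝[Set.Ioo 0 a] a).NeBot := by
    apply mem_closure_iff_nhdsWithin_neBot.mp
    rw [closure_Ioo ha.ne]
    exact ⟨ha.le, le_rfl⟩
  refine ge_of_tendsto h2 ?_
  filter_upwards [self_mem_nhdsWithin] with t ht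
  rw [slope_def_field]
  have h2' : f t - f a ≤ 0 := by linarith [hmax t ht]
  have h3 : t - a < 0 := by linarith [ht.2]
  exact div_nonneg_iff.mpr (Or.inr ⟨h2', h3.le⟩)

lemma second_deriv_nonpos (g G : ℝ → ℝ) (x₀ D : ℝ)
    (hg : ∀ x, HasDerivAt g (G x) x) (hG : HasDerivAt G D x₀)
    (hmax : IsLocalMax g x₀) : D ≤ 0 := by
  by_contra h
  push_neg at h
  have hG0 : G x₀ = 0 := hmax.hasDerivAt_eq_zero (hg x₀)
  have h1 : Tendsto (slope G x₀) (𝓝[>] x₀) (𝓝 D) :=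
    (hasDerivAt_iff_tendsto_slope.mp hG).mono_left
      (nhdsWithin_mono x₀ (fun x hx => ne_of_gt hx))
  have h2 : ∀ᶠ x in 𝓝[>] x₀, 0 < slope G x₀ x :=
    h1.eventually (eventually_gt_nhds h)
  have h3 : ∀ᶠ x in 𝓝[>] x₀, 0 < G x := by
    filter_upwards [h2, self_mem_nhdsWithin] with x hx hx'
    rw [slope_def_field, hG0, sub_zero] at hx
    have hpos : 0 < x - x₀ := sub_pos.mpr hx'
    by_contra hc
    push_neg at hc
    have : G x / (x - x₀) ≤ 0 := div_nonpos_of_nonpos_of_nonneg hc hpos.le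
    linarith
  have h4 : ∀ᶠ x in 𝓝 x₀, g x ≤ g x₀ := hmax
  obtain ⟨u, hu, hu3⟩ := (nhdsGT_basis x₀).eventually_iff.mp h3
  obtain ⟨δ₂, hδ₂, hδ₂'⟩ := Metric.eventually_nhds_iff.mp h4
  set b := min u (x₀ + δ₂/2) with hb
  have hbx : x₀ < b := lt_min hu (by linarith)
  have hmono : StrictMonoOn g (Set.Icc x₀ b) := by
    apply strictMonoOn_of_deriv_pos (convex_Icc _ _)
    · exact (fun x _ => ((hg x).differentiableAt).continuousAt.continuousWithinAt)
    · intro x hx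
      rw [interior_Icc] at hx
      rw [(hg x).deriv]
      exact hu3 ⟨hx.1, lt_of_lt_of_le hx.2 (min_le_left _ _)⟩
  have hlt : g x₀ < g b := hmono (Set.left_mem_Icc.mpr hbx.le) (Set.right_mem_Icc.mpr hbx.le) hbx
  have : g b ≤ g x₀ := by
    apply hδ₂'
    have : b ≤ x₀ + δ₂/2 := min_le_right _ _
    rw [Real.dist_eq, abs_lt]
    constructor <;> linarith
  linarith

set_option maxHeartbeats 1000000 in
theorem stmt13 (T ε m : ℝ) (hT : 0 < T) (hε : 0 < ε)
    (p : ℝ → ℝ) (hp : ContDiff ℝ 1 p)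
    (hm : ∀ t ∈ Set.Icc (0 : ℝ) T, |deriv p t| ≤ m)
    (β : ℝ → ℝ) (hβ : ∀ z, β z = m * (max 0 z) ^ 3)
    (w wt wx wxx : ℝ → ℝ → ℝ)
    (hwcont : Continuous (fun q : ℝ × ℝ => w q.1 q.2))
    (hbdd : ∃ Cb, ∀ x t, |w x t| ≤ Cb)
    (hwt : ∀ x, ∀ t ∈ Set.Ioc (0 : ℝ) T, HasDerivAt (fun τ => w x τ) (wt x t) t)
    (hwx : ∀ x, ∀ t ∈ Set.Ioc (0 : ℝ) T, HasDerivAt (fun y => w y t) (wx x t) x)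
    (hwxx : ∀ x, ∀ t ∈ Set.Ioc (0 : ℝ) T, HasDerivAt (fun y => wx y t) (wxx x t) x)
    (heq : ∀ x, ∀ t ∈ Set.Ioc (0 : ℝ) T, wt x t - wxx x t = -β ((w x t - p t) / ε))
    (hic : ∀ x, w x 0 ≤ p 0) :
    ∀ x, ∀ t ∈ Set.Ioc (0 : ℝ) T,
      w x t ≤ p t + ε ∧ 0 ≤ β ((w x t - p t) / ε) ∧ β ((w x t - p t) / ε) ≤ m := by
  obtain ⟨Cb, hCb⟩ := hbdd
  have hm0 : 0 ≤ m := le_trans (abs_nonneg _) (hm 0 ⟨le_rfl, hT.le⟩)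
  have hpdiff : Differentiable ℝ p := hp.differentiable one_ne_zero
  obtain ⟨Cp, hCp⟩ := isCompact_Icc.exists_bound_of_continuousOn
    (s := Set.Icc (0:ℝ) T) hp.continuous.continuousOn
  have key : ∀ x₀, ∀ t₀ ∈ Set.Ioc (0:ℝ) T, w x₀ t₀ ≤ p t₀ + ε := by
    intro x₀ t₀ ht₀
    by_contra hcon
    push_neg at hcon
    set a := w x₀ t₀ - p t₀ - ε with ha
    have ha0 : 0 < a := by simp only [ha]; linarith
    set σ := a / (2*(3*T + x₀^2 + 1)) with hσdef
    have hK0 : (0:ℝ) < 3*T + x₀^2 + 1 := by nlinarith [sq_nonneg x₀]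
    have hσ : 0 < σ := div_pos ha0 (by linarith)
    set u : ℝ → ℝ → ℝ := fun x t => ((w x t - p t) - ε) - σ*(3*t + x^2) with hu
    have hu0 : a/2 ≤ u x₀ t₀ := by
      have h1 : σ * (3*t₀ + x₀^2) ≤ σ * (3*T + x₀^2 + 1) :=
        mul_le_mul_of_nonneg_left (by nlinarith [ht₀.2]) hσ.le
      have h2 : σ * (3*T + x₀^2 + 1) = a/2 := by
        rw [hσdef, div_mul_eq_mul_div, div_eq_iff (by positivity)]
        ring
      simp only [hu]
      nlinarith
    have hupos : 0 < u x₀ t₀ := lt_of_lt_of_le (by linarith) hu0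
    -- bound on u
    set M := Cb + Cp with hM
    have hub : ∀ x, ∀ t ∈ Set.Icc (0:ℝ) T, u x t ≤ M - σ*x^2 := by
      intro x t ht
      have h1 : w x t ≤ Cb := le_of_abs_le (hCb x t)
      have h2 : -Cp ≤ p t := by
        have := hCp t ht
        rw [Real.norm_eq_abs, abs_le] at this
        linarith [this.1]
      have h3 : 0 ≤ σ * (3*t) := mul_nonneg hσ.le (by linarith [ht.1])
      simp only [hu, hM]
      nlinarith [mul_nonneg hσ.le ht.1]
    -- choose R
    set A := max 0 ((M - u x₀ t₀ + 1)/σ) with hA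
    set R := max |x₀| (Real.sqrt A) + 1 with hR
    have hRpos : 0 < R := by positivity
    have hRx₀ : |x₀| < R := lt_of_le_of_lt (le_max_left _ _) (by rw [hR]; linarith)
    have hRA : A < R^2 := by
      have h1 : Real.sqrt A < R := lt_of_le_of_lt (le_max_right _ _) (by rw [hR]; linarith)
      have h2 : 0 ≤ Real.sqrt A := Real.sqrt_nonneg _
      nlinarith [Real.sq_sqrt (le_max_left 0 ((M - u x₀ t₀ + 1)/σ))]
    have hfar : ∀ x, R ≤ |x| → ∀ t ∈ Set.Icc (0:ℝ) T, u x t < u x₀ t₀ := by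
      intro x hx t ht
      have h1 : R^2 ≤ x^2 := by
        rw [← sq_abs x]
        exact pow_le_pow_left₀ hRpos.le hx 2
      have h2 : (M - u x₀ t₀ + 1)/σ ≤ A := le_max_right _ _
      have h3 : M - u x₀ t₀ + 1 ≤ σ * x^2 := by
        rw [div_le_iff₀ hσ] at h2
        nlinarith
      have h4 := hub x t ht
      linarith
    -- compact max
    set K := Set.Icc (-R) R ×ˢ Set.Icc (0:ℝ) T with hKdef
    have hKc : IsCompact K := isCompact_Icc.prod isCompact_Icc
    have hKne : K.Nonempty := ⟨(x₀, t₀), ⟨abs_le.mp hRx₀.le |>.1 |> fun h => ⟨h, (abs_le.mp hRx₀.le).2⟩, ht₀.1.le, ht₀.2⟩⟩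
    have hucont : Continuous (fun q : ℝ × ℝ => u q.1 q.2) := by
      simp only [hu]
      exact ((hwcont.sub (hp.continuous.comp continuous_snd)).sub continuous_const).sub
        (continuous_const.mul ((continuous_const.mul continuous_snd).add (continuous_fst.pow 2)))
    obtain ⟨⟨x₁, t₁⟩, hmem, hmax⟩ := hKc.exists_isMaxOn hKne hucont.continuousOn
    have hmax' : ∀ x t, x ∈ Set.Icc (-R) R → t ∈ Set.Icc (0:ℝ) T → u x t ≤ u x₁ t₁ :=
      fun x t hx ht => hmax (Set.mk_mem_prod hx ht)
    have hu1 : u x₀ t₀ ≤ u x₁ t₁ :=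
      hmax' x₀ t₀ ⟨(abs_le.mp hRx₀.le).1 |> fun h => by linarith [(abs_le.mp hRx₀.le).1], (abs_le.mp hRx₀.le).2⟩ ⟨ht₀.1.le, ht₀.2⟩
    have ht₁T : t₁ ∈ Set.Icc (0:ℝ) T := hmem.2
    have hx₁R : |x₁| < R := by
      by_contra hc
      push_neg at hc
      have := hfar x₁ hc t₁ ht₁T
      linarith
    have ht₁0 : 0 < t₁ := by
      rcases lt_or_eq_of_le ht₁T.1 with h | h
      · exact h
      · exfalso
        subst h
        have h1 : u x₁ 0 ≤ -ε := by
          have := hic x₁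
          have h2 : 0 ≤ σ * (3*(0:ℝ) + x₁^2) := mul_nonneg hσ.le (by positivity)
          simp only [hu]
          nlinarith
        linarith
    have ht₁ : t₁ ∈ Set.Ioc (0:ℝ) T := ⟨ht₁0, ht₁T.2⟩
    -- t derivative
    have hft : HasDerivAt (fun τ => ((w x₁ τ - p τ) - ε) - σ*(3*τ + x₁^2))
        ((wt x₁ t₁ - deriv p t₁) - σ*(3*1)) t₁ :=
      (((hwt x₁ t₁ ht₁).sub (hpdiff t₁).hasDerivAt).sub_const ε).sub
        ((((hasDerivAt_id t₁).const_mul (3:ℝ)).add_const (x₁^2)).const_mul σ)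
    have htineq : 0 ≤ wt x₁ t₁ - deriv p t₁ - 3*σ := by
      have := deriv_nonneg_of_max_left _ _ _ ht₁0 hft
        (fun t ht => hmax' x₁ t ⟨by linarith [abs_le.mp hx₁R.le |>.1, (abs_le.mp hx₁R.le).1], (abs_le.mp hx₁R.le).2⟩ ⟨ht.1.le, le_trans ht.2.le ht₁T.2⟩)
      linarith
    -- x derivative
    set g : ℝ → ℝ := fun x => ((w x t₁ - p t₁) - ε) - σ*(3*t₁ + x^2) with hg
    set G : ℝ → ℝ := fun x => wx x t₁ - σ*(2*x) with hG
    have hgG : ∀ x, HasDerivAt g (G x) x := by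
      intro x
      have h1 : HasDerivAt (fun y : ℝ => σ*(3*t₁ + y^2)) (σ*(2*x)) x := by
        have := ((hasDerivAt_pow 2 x).const_add (3*t₁)).const_mul σ
        simpa using this
      exact (((hwx x t₁ ht₁).sub_const (p t₁)).sub_const ε).sub h1
    have hGd : HasDerivAt G (wxx x₁ t₁ - σ*2) x₁ := by
      have h1 : HasDerivAt (fun y : ℝ => σ*(2*y)) (σ*2) x₁ := by
        have := ((hasDerivAt_id x₁).const_mul (2:ℝ)).const_mul σ
        simpa using this
      exact (hwxx x₁ t₁ ht₁).sub h1
    have hlocmax : IsLocalMax g x₁ := by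
      have hnb : Set.Ioo (-R) R ∈ 𝓝 x₁ :=
        isOpen_Ioo.mem_nhds ⟨(abs_lt.mp hx₁R).1, (abs_lt.mp hx₁R).2⟩
      filter_upwards [hnb] with x hx
      exact hmax' x t₁ ⟨hx.1.le, hx.2.le⟩ ht₁T
    have hxineq : wxx x₁ t₁ - σ*2 ≤ 0 := second_deriv_nonpos g G x₁ _ hgG hGd hlocmax
    -- PDE contradiction
    have hupos1 : 0 < u x₁ t₁ := lt_of_lt_of_le hupos hu1
    have hz : 1 < (w x₁ t₁ - p t₁)/ε := by
      have h1 : 0 ≤ σ * (3*t₁ + x₁^2) := by positivity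
      rw [lt_div_iff₀ hε]
      simp only [hu] at hupos1
      nlinarith
    have hβge : m ≤ β ((w x₁ t₁ - p t₁)/ε) := by
      rw [hβ]
      set z := (w x₁ t₁ - p t₁)/ε
      have h1 : max 0 z = z := max_eq_right (by linarith)
      rw [h1]
      have hz3 : (1:ℝ) ≤ z^3 := one_le_pow₀ hz.le
      nlinarith
    have hpd : -m ≤ deriv p t₁ := by
      have := hm t₁ ht₁T
      rw [abs_le] at this
      linarith [this.1]
    have hpde := heq x₁ t₁ ht₁
    linarith
  intro x t ht
  refine ⟨key x t ht, ?_, ?_⟩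
  · rw [hβ]
    exact mul_nonneg hm0 (pow_nonneg (le_max_left _ _) 3)
  · rw [hβ]
    have h1 : (w x t - p t)/ε ≤ 1 := by
      rw [div_le_one hε]
      linarith [key x t ht]
    have h2 : max 0 ((w x t - p t)/ε) ≤ 1 := max_le zero_le_one h1
    have h3 : (max 0 ((w x t - p t)/ε))^3 ≤ 1 :=
      pow_le_one₀ (le_max_left _ _) h2
    nlinarith
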